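/- For every positive odd integer n, the function f has a critical point c_n in the open interval (n, n + 3/(π²n)), i.e., there exists c with n < c < n + 3/(π²n) and f'(c) = 0. -/

import Mathlib

noncomputable def f (x : ℝ) : ℝ := x + 1/4 - (x/2 + 1/4) * Real.cos (Real.pi * x)

noncomputable def g (x : ℝ) : ℝ :=
  1 - Real.cos (Real.pi * x) / 2 + Real.pi * (x/2 + 1/4) * Real.sin (Real.pi * x)

lemma f_hasDerivAt (x : ℝ) : HasDerivAt f (g x) x := by
  have h1 : HasDerivAt (fun y : ℝ => Real.pi * y) Real.pi x := by
    simpa using (hasDerivAt_id x).const_mul Real.pi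
  have hcos : HasDerivAt (fun y : ℝ => Real.cos (Real.pi * y)) (-Real.sin (Real.pi * x) * Real.pi) x :=
    (Real.hasDerivAt_cos (Real.pi * x)).comp x h1
  have hlin : HasDerivAt (fun y : ℝ => y/2 + 1/4) (1/2 : ℝ) x := by
    simpa using ((hasDerivAt_id x).div_const 2).add_const (1/4 : ℝ)
  have hid : HasDerivAt (fun y : ℝ => y + 1/4) 1 x := (hasDerivAt_id x).add_const _
  have h := hid.sub (hlin.mul hcos)
  have : HasDerivAt f (1 - (1/2 * Real.cos (Real.pi * x) + (x/2 + 1/4) * (-Real.sin (Real.pi * x) * Real.pi))) x := h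
  convert this using 1
  unfold g; ring

lemma deriv_f_eq : deriv f = g := funext fun x => (f_hasDerivAt x).deriv

lemma g_cont : Continuous g := by unfold g; continuity

set_option maxHeartbeats 1000000 in
theorem stmt_4 (n : ℕ) (hn : 0 < n) (ho : Odd n) :
    ∃ c : ℝ, (n : ℝ) < c ∧ c < (n : ℝ) + 3 / (Real.pi ^ 2 * n) ∧ deriv f c = 0 := by
  have hpi := Real.pi_gt_three
  have hpipos : (0:ℝ) < Real.pi := by linarith
  have hn1 : (1:ℝ) ≤ n := by exact_mod_cast hn
  have hnpos : (0:ℝ) < n := by linarith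
  set a : ℝ := (n : ℝ)
  set b : ℝ := (n : ℝ) + 3 / (Real.pi ^ 2 * n) with hb
  have hδpos : (0:ℝ) < 3 / (Real.pi ^ 2 * n) := by positivity
  have hab : a < b := by simp only [hb, a]; nlinarith [hδpos]
  -- trig values at n
  have hcosn : Real.cos (Real.pi * n) = -1 := by
    have : Real.cos ((n:ℝ) * Real.pi) = (-1:ℝ)^n := by
      simpa using Real.cos_nat_mul_pi_sub 0 n
    rw [mul_comm, this, ho.neg_one_pow]
  have hsinn : Real.sin (Real.pi * n) = 0 := by
    rw [mul_comm]; exact Real.sin_nat_mul_pi n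
  have hga : g a = 3/2 := by
    simp [g, a, hcosn, hsinn]; ring
  -- t
  set t : ℝ := 3 / (Real.pi * n) with ht
  clear_value t
  have htpos : 0 < t := by rw [ht]; positivity
  have htle : t ≤ 1 := by
    rw [ht, div_le_one (by positivity)]
    nlinarith
  have hpb : Real.pi * b = Real.pi * n + t := by
    rw [hb, ht]
    field_simp
  have hcosb : Real.cos (Real.pi * b) = -Real.cos t := by
    rw [hpb, Real.cos_add, hcosn, hsinn]; ring
  have hsinb : Real.sin (Real.pi * b) = -Real.sin t := by
    rw [hpb, Real.sin_add, hcosn, hsinn]; ring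
  have hsint : t - t^3/4 < Real.sin t := by have := Real.sin_gt_sub_cube htpos; linarith [pow_pos htpos 3]
  have hcost : Real.cos t ≤ 1 := Real.cos_le_one t
  have hgb : g b < 0 := by
    have hC : (0:ℝ) < Real.pi * (b/2 + 1/4) := by
      have : 0 < b := by nlinarith
      positivity
    have hkey : Real.pi * (b/2 + 1/4) * (t - t^3/4) > 3/2 := by
      have hpn : Real.pi * n = 3 / t := by
        rw [ht]; field_simp
      have h3 : 3 / (Real.pi * t) = (n:ℝ) := by rw [ht]; field_simp
      have hbt : b = 3 / (Real.pi * t) + 3 / (Real.pi ^2 * n) := by rw [h3, hb]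
      have h1 : Real.pi * b = 3 / t + t := by
        rw [hbt, ht]; field_simp
      have h2 : Real.pi * (b/2 + 1/4) = 3/(2*t) + t/2 + Real.pi/4 := by
        rw [show Real.pi * (b/2 + 1/4) = (Real.pi * b)/2 + Real.pi/4 by ring, h1]
        ring
      rw [h2]
      have ht0 : t ≠ 0 := ne_of_gt htpos
      rw [gt_iff_lt, show (3/(2*t) + t/2 + Real.pi/4) * (t - t^3/4)
        = 3/2 + t^2/8 + (Real.pi/4)*t - (Real.pi/16)*t^3 - t^4/8 by field_simp; ring]
      have ht2 : t^2 ≤ 1 := by nlinarith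
      nlinarith [mul_pos hpipos htpos, mul_nonneg (mul_pos hpipos htpos).le (sub_nonneg.mpr ht2),
        mul_nonneg (sq_nonneg t) (sub_nonneg.mpr ht2)]
    have : Real.pi * (b/2 + 1/4) * Real.sin t > 3/2 :=
      lt_of_lt_of_le hkey (le_of_lt (by exact (mul_lt_mul_of_pos_left hsint hC)))
    simp only [g, hcosb, hsinb]
    nlinarith
  -- IVT
  have hcont : ContinuousOn g (Set.Icc a b) := g_cont.continuousOn
  have hsub := intermediate_value_Ioo' (le_of_lt hab) hcont
  have h0 : (0:ℝ) ∈ Set.Ioo (g b) (g a) := by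
    constructor
    · exact hgb
    · rw [hga]; norm_num
  obtain ⟨c, hc, hgc⟩ := hsub h0
  exact ⟨c, hc.1, hc.2, by rw [deriv_f_eq]; exact hgc⟩
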